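/- For the system ẋ = −y, ẏ = x + x^{2m−1} y (x² + y²) written in polar coordinates (ρ, θ), the function t − θ − ρ^{2m+1} cos^{2m+1}(θ)/(2m+1) is constant along every solution; i.e., if (ρ(t), θ(t)) satisfies ρ' = ρ^{2m+2} cos^{2m−1}θ sin²θ and θ' = 1 + ρ^{2m+1} cos^{2m}θ sin θ, then d/dt [θ(t) + ρ(t)^{2m+1} cos^{2m+1}θ(t)/(2m+1)] = 1. -/

import Mathlib

open Real

theorem isochronicity_invariant_polar
    (m : ℕ) (hm : 1 ≤ m) (ρ θ : ℝ → ℝ)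
    (hρ : ∀ t, HasDerivAt ρ
      (ρ t ^ (2 * m + 2) * Real.cos (θ t) ^ (2 * m - 1) * Real.sin (θ t) ^ 2) t)
    (hθ : ∀ t, HasDerivAt θ
      (1 + ρ t ^ (2 * m + 1) * Real.cos (θ t) ^ (2 * m) * Real.sin (θ t)) t) :
    ∀ t, HasDerivAt
      (fun s => θ s + ρ s ^ (2 * m + 1) * Real.cos (θ s) ^ (2 * m + 1) / (2 * m + 1))
      1 t := by
  obtain ⟨n, rfl⟩ : ∃ n, m = n + 1 := ⟨m - 1, by omega⟩
  intro t
  have hc : HasDerivAt (fun s => Real.cos (θ s))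
      (-Real.sin (θ t) * (1 + ρ t ^ (2*(n+1)+1) * Real.cos (θ t) ^ (2*(n+1)) * Real.sin (θ t))) t :=
    (Real.hasDerivAt_cos (θ t)).comp t (hθ t)
  have h1 := ((hρ t).pow (2*(n+1)+1)).mul (hc.pow (2*(n+1)+1))
  have h2 := (hθ t).add (h1.div_const (2*(n+1)+1))
  convert h2 using 1
  · rfl
  · rfl
  · funext s; simp only [Pi.add_apply, Pi.mul_apply, Pi.pow_apply]; push_cast; ring
  · have hs : (2*(n+1) - 1 : ℕ) = 2*n+1 := by omega
    simp only [hs, Nat.add_sub_cancel, Pi.mul_apply, Pi.pow_apply]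
    push_cast
    have hne : (2*((n:ℝ)+1)+1) ≠ 0 := by positivity
    field_simp
    ring
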